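/- Let f(k) = Σ_{j=1}^K (k_{j1}² + k_{j2}² + 2k_{j3}²) + 2α Σ_{1≤j<i≤K} (k_{j1}k_{i1} + k_{j2}k_{i2} + 2k_{j3}k_{i3}) subject to k_{j1},k_{j2} ≥ 0, k_{j3}² ≤ k_{j1}k_{j2}, and k_{j1}+k_{j2}=1 for all j, with 0<α<1. Then the point k_{j1}=k_{j2}=1/2, k_{j3}=0 for all j is a global minimizer of f. -/

import Mathlib

open Finset

lemma sq_sum_eq {n : ℕ} (x : Fin n → ℝ) :
    (∑ j, x j)^2 = (∑ j, x j^2) + 2 * ∑ j, ∑ i ∈ Ioi j, x j * x i := by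
  have h := Finset.sum_sum_Ioi_add_eq_sum_sum_off_diag (fun i j => x i * x j)
  have h' : ∑ i : Fin n, ∑ j ∈ ({i}ᶜ : Finset (Fin n)), x j * x i
      = ∑ i : Fin n, ∑ j ∈ Ioi i, (x j * x i + x i * x j) := by
    convert h.symm using 5
  have h2 : (∑ j, x j)^2 = ∑ i, ∑ j, x j * x i := by
    rw [sq, Finset.sum_mul_sum]
    exact Finset.sum_comm.trans (by simp [mul_comm])
  have h3 : ∀ i : Fin n, (∑ j, x j * x i) = x i * x i + ∑ j ∈ ({i}ᶜ : Finset (Fin n)), x j * x i := by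
    intro i
    rw [Finset.compl_singleton]
    exact (Finset.add_sum_erase _ (fun j => x j * x i) (Finset.mem_univ i)).symm
  simp only [h3] at h2
  rw [Finset.sum_add_distrib, h'] at h2
  rw [h2]
  have h4 : ∀ j : Fin n, (∑ i ∈ Ioi j, (x i * x j + x j * x i)) = 2 * ∑ i ∈ Ioi j, x j * x i := by
    intro j
    rw [Finset.mul_sum]
    exact Finset.sum_congr rfl (fun i _ => by ring)
  simp only [h4]
  rw [← Finset.mul_sum]
  congr 1
  exact Finset.sum_congr rfl (fun j _ => by rw [sq])

/-- The quadratic objective in the scalar variables `k_{j1}, k_{j2}, k_{j3}`. -/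
def fObj {K : ℕ} (α : ℝ) (k : Fin K → ℝ × ℝ × ℝ) : ℝ :=
  (∑ j, ((k j).1 ^ 2 + (k j).2.1 ^ 2 + 2 * (k j).2.2 ^ 2)) +
    2 * α * ∑ j, ∑ i ∈ Finset.Ioi j,
      ((k j).1 * (k i).1 + (k j).2.1 * (k i).2.1 + 2 * (k j).2.2 * (k i).2.2)

lemma fObj_eq {K : ℕ} (α : ℝ) (k : Fin K → ℝ × ℝ × ℝ) :
    fObj α k = (1 - α) * ((∑ j, (k j).1 ^ 2) + (∑ j, (k j).2.1 ^ 2) + 2 * ∑ j, (k j).2.2 ^ 2)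
      + α * ((∑ j, (k j).1) ^ 2 + (∑ j, (k j).2.1) ^ 2 + 2 * (∑ j, (k j).2.2) ^ 2) := by
  have ha := sq_sum_eq (fun j => (k j).1)
  have hb := sq_sum_eq (fun j => (k j).2.1)
  have hc := sq_sum_eq (fun j => (k j).2.2)
  have hsplit : ∀ j : Fin K, (∑ i ∈ Ioi j,
      ((k j).1 * (k i).1 + (k j).2.1 * (k i).2.1 + 2 * (k j).2.2 * (k i).2.2))
      = (∑ i ∈ Ioi j, (k j).1 * (k i).1) + (∑ i ∈ Ioi j, (k j).2.1 * (k i).2.1)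
        + 2 * ∑ i ∈ Ioi j, (k j).2.2 * (k i).2.2 := by
    intro j
    rw [Finset.mul_sum, ← Finset.sum_add_distrib, ← Finset.sum_add_distrib]
    exact Finset.sum_congr rfl fun i _ => by ring
  unfold fObj
  simp only [hsplit]
  rw [Finset.sum_add_distrib, Finset.sum_add_distrib, ← Finset.mul_sum,
    Finset.sum_add_distrib, Finset.sum_add_distrib, ← Finset.mul_sum]
  linear_combination (-α) * ha + (-α) * hb + (-2 * α) * hc

/-- The point `k_{j1} = k_{j2} = 1/2, k_{j3} = 0` is a global minimizer of `f`
on the feasible region. -/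
theorem stmt5 (K : ℕ) (hK : 1 ≤ K) (α : ℝ) (hα : 0 < α) (hα1 : α < 1)
    (k : Fin K → ℝ × ℝ × ℝ)
    (h1 : ∀ j, 0 ≤ (k j).1) (h2 : ∀ j, 0 ≤ (k j).2.1)
    (h3 : ∀ j, (k j).2.2 ^ 2 ≤ (k j).1 * (k j).2.1)
    (h4 : ∀ j, (k j).1 + (k j).2.1 = 1) :
    fObj (K := K) α (fun _ : Fin K => ((1 / 2 : ℝ), (1 / 2 : ℝ), (0 : ℝ))) ≤ fObj α k := by
  rw [fObj_eq, fObj_eq]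
  simp only [Finset.sum_const, card_univ, Fintype.card_fin, nsmul_eq_mul]
  set Sa := ∑ j, (k j).1 ^ 2
  set Sb := ∑ j, (k j).2.1 ^ 2
  set Sc := ∑ j, (k j).2.2 ^ 2
  set A := ∑ j, (k j).1
  set B := ∑ j, (k j).2.1
  set C := ∑ j, (k j).2.2
  have hAB : A + B = K := by
    rw [← Finset.sum_add_distrib]
    simp [h4]
  have hSab : (K : ℝ) * (1 / 2) ≤ Sa + Sb := by
    have hj : ∀ j : Fin K, (1 / 2 : ℝ) ≤ (k j).1 ^ 2 + (k j).2.1 ^ 2 := fun j =>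
      by nlinarith [h4 j, sq_nonneg ((k j).1 - (k j).2.1)]
    calc (K : ℝ) * (1 / 2) = ∑ _j : Fin K, (1 / 2 : ℝ) := by simp
    _ ≤ ∑ j, ((k j).1 ^ 2 + (k j).2.1 ^ 2) := Finset.sum_le_sum fun j _ => hj j
    _ = Sa + Sb := Finset.sum_add_distrib
  have hSc : 0 ≤ Sc := Finset.sum_nonneg fun j _ => sq_nonneg _
  have hABsq : (K : ℝ) ^ 2 * (1 / 2) ≤ A ^ 2 + B ^ 2 := by nlinarith [sq_nonneg (A - B)]
  have hC : 0 ≤ C ^ 2 := sq_nonneg _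
  have hK' : (1 : ℝ) ≤ K := by exact_mod_cast hK
  nlinarith [mul_nonneg (le_of_lt hα) hC, mul_nonneg (by linarith : (0:ℝ) ≤ 1 - α) hSc,
    mul_le_mul_of_nonneg_left hSab (by linarith : (0:ℝ) ≤ 1 - α),
    mul_le_mul_of_nonneg_left hABsq (le_of_lt hα)]
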